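/- Let S be a set of n ≥ 2 points in general position in the plane. Then there are at least 2^{n−1} generalized peeling paths on S, counted as oriented plane spanning paths. -/

import Mathlib

open Set

/-- Points of the plane. -/
abbrev Pt : Type := ℝ × ℝ

/-- Two straight segments cross if their relative interiors (open segments) share a point. -/
def SegCross (a b c d : Pt) : Prop :=
  (openSegment ℝ a b ∩ openSegment ℝ c d).Nonempty

/-- A finite point set is in general position if no three of its points are collinear. -/
def GeneralPosition (S : Finset Pt) : Prop :=
  ∀ a ∈ S, ∀ b ∈ S, ∀ c ∈ S, a ≠ b → a ≠ c → b ≠ c → ¬ Collinear ℝ ({a, b, c} : Set Pt)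

/-- A finite point set is in convex position: it is in general position and every point is an
extreme point of the convex hull (it is not in the convex hull of the other points). -/
def ConvexPosition (S : Finset Pt) : Prop :=
  GeneralPosition S ∧ ∀ x ∈ S, x ∉ convexHull ℝ ((S : Set Pt) \ {x})

/-- Orientation determinant of the triple `a b c`. -/
noncomputable def det2 (a b c : Pt) : ℝ :=
  (b.1 - a.1) * (c.2 - a.2) - (b.2 - a.2) * (c.1 - a.1)

/-- For a point set `T` in general position, the segment `ab` is an edge of the boundary of the
convex hull of `T` iff all other points of `T` lie strictly on one side of the line `ab`. -/
def HullEdge (T : Set Pt) (a b : Pt) : Prop :=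
  a ∈ T ∧ b ∈ T ∧ a ≠ b ∧
    ((∀ x ∈ T, x ≠ a → x ≠ b → 0 < det2 a b x) ∨ (∀ x ∈ T, x ≠ a → x ≠ b → det2 a b x < 0))

/-- `a` is a vertex (extreme point) of the convex hull of `T`. -/
def HullVertex (T : Set Pt) (a : Pt) : Prop :=
  a ∈ T ∧ a ∉ convexHull ℝ (T \ {a})

/-- A plane spanning tree on a finite point set `S`: a tree with vertex set `S` whose
edges, drawn as straight segments, pairwise do not cross. -/
structure PlaneTree (S : Finset Pt) where
  graph : SimpleGraph {x : Pt // x ∈ S}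
  isTree : graph.IsTree
  noncross : ∀ a b c d : {x : Pt // x ∈ S}, graph.Adj a b → graph.Adj c d →
    s(a, b) ≠ s(c, d) → ¬ SegCross a.1 b.1 c.1 d.1

/-- A vertex of a graph is a leaf if it has exactly one neighbour. -/
def IsLeafV {V : Type*} (G : SimpleGraph V) (v : V) : Prop :=
  (G.neighborSet v).ncard = 1

/-- A graph is a path graph (possibly empty or a single vertex) if its vertices can be
enumerated so that adjacency is exactly consecutiveness. -/
def IsPathGraph {V : Type*} (G : SimpleGraph V) : Prop :=
  ∃ (n : ℕ) (f : Fin n ≃ V), ∀ i j : Fin n, G.Adj (f i) (f j) ↔ (i.1 + 1 = j.1 ∨ j.1 + 1 = i.1)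

/-- A caterpillar: a tree in which the non-leaf vertices induce a path
(possibly empty or a single vertex), called the spine. -/
def IsCaterpillar {V : Type*} (G : SimpleGraph V) : Prop :=
  G.IsTree ∧ IsPathGraph (G.induce {v : V | ¬ IsLeafV G v})

/-- A plane spanning caterpillar on `S`. -/
structure PlaneCaterpillar (S : Finset Pt) extends PlaneTree S where
  isCaterpillar : IsCaterpillar graph

/-- A plane spanning path on `S`. -/
structure PlanePath (S : Finset Pt) extends PlaneTree S where
  isPath : IsPathGraph graph

/-- The (closed) triangle spanned by `a`, `b`, `c` contains no point of `S` besides `a,b,c`. -/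
def EmptyTriangle (S : Finset Pt) (a b c : Pt) : Prop :=
  ∀ x ∈ S, x ∈ convexHull ℝ ({a, b, c} : Set Pt) → x = a ∨ x = b ∨ x = c

/-- One caterpillar is obtained from another by a slide: `E₂ = (E₁ \ {ab}) ∪ {ac}` where the
triangle `abc` contains no other point of `S` and `bc ∈ E₁ ∩ E₂`. -/
def SlideAux {S : Finset Pt} (C₁ C₂ : PlaneCaterpillar S) : Prop :=
  ∃ a b c : {x : Pt // x ∈ S},
    C₁.graph.Adj a b ∧ C₁.graph.Adj b c ∧ C₂.graph.Adj b c ∧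
    EmptyTriangle S a.1 b.1 c.1 ∧
    C₂.graph.edgeSet = (C₁.graph.edgeSet \ {s(a, b)}) ∪ {s(a, c)}

/-- The (symmetric) slide relation: the edge relation of the slide graph `G_C^slide(S)`. -/
def Slide {S : Finset Pt} (C₁ C₂ : PlaneCaterpillar S) : Prop :=
  SlideAux C₁ C₂ ∨ SlideAux C₂ C₁

/-- A sequence of `m` slides transforming `C₁` into `C₂`. -/
def SlideSeq {S : Finset Pt} (m : ℕ) (C₁ C₂ : PlaneCaterpillar S) : Prop :=
  ∃ g : ℕ → PlaneCaterpillar S, g 0 = C₁ ∧ g m = C₂ ∧ ∀ i < m, Slide (g i) (g (i + 1))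

/-- Rotation: `E₂ = (E₁ \ {ab}) ∪ {ac}` for distinct edges `ab`, `ac` sharing the endpoint `a`. -/
def RotationAux {S : Finset Pt} (C₁ C₂ : PlaneCaterpillar S) : Prop :=
  ∃ a b c : {x : Pt // x ∈ S}, b ≠ c ∧ C₁.graph.Adj a b ∧
    C₂.graph.edgeSet = (C₁.graph.edgeSet \ {s(a, b)}) ∪ {s(a, c)}

/-- The (symmetric) rotation relation: the edge relation of the rotation graph `G_C^rot(S)`. -/
def Rotation {S : Finset Pt} (C₁ C₂ : PlaneCaterpillar S) : Prop :=
  RotationAux C₁ C₂ ∨ RotationAux C₂ C₁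

/-- Flip of caterpillars: `E₂ = (E₁ \ {e}) ∪ {f}` for edges `e = ab`, `f = cd`. -/
def CatFlipAux {S : Finset Pt} (C₁ C₂ : PlaneCaterpillar S) : Prop :=
  ∃ a b c d : {x : Pt // x ∈ S}, C₁.graph.Adj a b ∧ C₂.graph.Adj c d ∧
    C₂.graph.edgeSet = (C₁.graph.edgeSet \ {s(a, b)}) ∪ {s(c, d)}

/-- The (symmetric) flip relation on caterpillars: edge relation of `G_C^flip(S)`. -/
def CatFlip {S : Finset Pt} (C₁ C₂ : PlaneCaterpillar S) : Prop :=
  CatFlipAux C₁ C₂ ∨ CatFlipAux C₂ C₁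

/-- Compatible flip of caterpillars: a flip whose two exchanged edges do not cross. -/
def CatCompFlipAux {S : Finset Pt} (C₁ C₂ : PlaneCaterpillar S) : Prop :=
  ∃ a b c d : {x : Pt // x ∈ S}, C₁.graph.Adj a b ∧ C₂.graph.Adj c d ∧
    ¬ SegCross a.1 b.1 c.1 d.1 ∧
    C₂.graph.edgeSet = (C₁.graph.edgeSet \ {s(a, b)}) ∪ {s(c, d)}

/-- The (symmetric) compatible flip relation: edge relation of `G_C^comp-flip(S)`. -/
def CatCompFlip {S : Finset Pt} (C₁ C₂ : PlaneCaterpillar S) : Prop :=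
  CatCompFlipAux C₁ C₂ ∨ CatCompFlipAux C₂ C₁

/-- The spanning star on `S` with center `x`. -/
def starGraph (S : Finset Pt) (x : {p : Pt // p ∈ S}) : SimpleGraph {p : Pt // p ∈ S} where
  Adj a b := a ≠ b ∧ (a = x ∨ b = x)
  symm := ⟨fun a b h => ⟨h.1.symm, h.2.symm⟩⟩
  loopless := ⟨fun a h => h.1 rfl⟩

/-- `s` is an endpoint of the spine of the caterpillar `C`: it is a non-leaf vertex having at
most one non-leaf neighbour. -/
def SpineEndpoint {S : Finset Pt} (C : PlaneCaterpillar S) (s : {p : Pt // p ∈ S}) : Prop :=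
  ¬ IsLeafV C.graph s ∧
    ∀ w w' : {p : Pt // p ∈ S}, C.graph.Adj s w → C.graph.Adj s w' →
      ¬ IsLeafV C.graph w → ¬ IsLeafV C.graph w' → w = w'

/-- `C` is a double star with centers `u` and `v`: it contains the edge `uv` and every other
vertex is a leaf adjacent to `u` or to `v`. -/
def IsDoubleStar {S : Finset Pt} (C : PlaneCaterpillar S) (u v : {p : Pt // p ∈ S}) : Prop :=
  C.graph.Adj u v ∧ ∀ w : {p : Pt // p ∈ S}, w ≠ u → w ≠ v →
    IsLeafV C.graph w ∧ (C.graph.Adj u w ∨ C.graph.Adj v w)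

/-- The points of `S` remaining after removing `v 0, …, v (i-1)`. -/
def PeelRest (S : Finset Pt) (v : ℕ → Pt) (i : ℕ) : Set Pt :=
  {x : Pt | x ∈ S ∧ ∀ j < i, v j ≠ x}

/-- `v 0, …, v (n-1)` is a generalized peeling path on `S`: an orientation of a plane spanning
path such that `v 0` is a hull vertex of `S` and each subsequent `v i` is a hull vertex of the
set of remaining points, with the segment from `v (i-1)` not crossing any edge of the hull of
the remaining points. -/
def IsGenPeelingSeq (S : Finset Pt) (n : ℕ) (v : ℕ → Pt) : Prop :=
  (∀ i < n, v i ∈ S) ∧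
  (∀ i < n, ∀ j < n, v i = v j → i = j) ∧
  (∀ x ∈ S, ∃ i < n, v i = x) ∧
  (∀ i j : ℕ, i + 1 < n → j + 1 < n → i ≠ j →
    ¬ SegCross (v i) (v (i + 1)) (v j) (v (j + 1))) ∧
  HullVertex (S : Set Pt) (v 0) ∧
  (∀ i : ℕ, 0 < i → i < n →
    HullVertex (PeelRest S v i) (v i) ∧
    ∀ a b : Pt, HullEdge (PeelRest S v i) a b → ¬ SegCross (v (i - 1)) (v i) a b)

/-- A plane spanning path admits an orientation making it a generalized peeling path. -/
def IsPeelingPath {S : Finset Pt} (P : PlanePath S) : Prop :=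
  ∃ v : ℕ → Pt, IsGenPeelingSeq S S.card v ∧
    ∀ a b : {x : Pt // x ∈ S}, P.graph.Adj a b ↔
      ∃ i : ℕ, i + 1 < S.card ∧
        ((v i = a.1 ∧ v (i + 1) = b.1) ∨ (v i = b.1 ∧ v (i + 1) = a.1))

/-- Flip of plane spanning paths: `E₂ = (E₁ \ {e}) ∪ {f}` for edges `e = ab`, `f = cd`. -/
def PathFlipAux {S : Finset Pt} (P Q : PlanePath S) : Prop :=
  ∃ a b c d : {x : Pt // x ∈ S}, P.graph.Adj a b ∧ Q.graph.Adj c d ∧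
    Q.graph.edgeSet = (P.graph.edgeSet \ {s(a, b)}) ∪ {s(c, d)}

/-- The flip graph `G_P(S)` of plane spanning paths on `S`. -/
def flipGraph (S : Finset Pt) : SimpleGraph (PlanePath S) where
  Adj P Q := P ≠ Q ∧ (PathFlipAux P Q ∨ PathFlipAux Q P)
  symm := ⟨fun P Q h => ⟨h.1.symm, h.2.symm⟩⟩
  loopless := ⟨fun P h => h.1 rfl⟩

/-- The point `u` is an endpoint of the plane spanning path `P`. -/
def IsPathEndpoint {S : Finset Pt} (P : PlanePath S) (u : Pt) : Prop :=
  ∃ hu : u ∈ S, IsLeafV P.graph ⟨u, hu⟩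

/-- The subgraph `G_P^u(S)` of the flip graph induced by the paths with endpoint `u`. -/
def flipGraphU (S : Finset Pt) (u : Pt) :
    SimpleGraph {P : PlanePath S // IsPathEndpoint P u} where
  Adj P Q := (flipGraph S).Adj P.1 Q.1
  symm := ⟨fun P Q h => (flipGraph S).adj_symm h⟩
  loopless := ⟨fun P h => (flipGraph S).irrefl h⟩

/-- A caterpillar is well-separated: there is an enumeration `f 0, …, f (k-1)` of its spine
(the non-leaf vertices, in path order) such that for every `i` the convex hull of the set
`S_{1,i}` of the first `i+1` spine vertices together with their leaves contains no other
point of `S`. -/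
def WellSeparated {S : Finset Pt} (C : PlaneCaterpillar S) : Prop :=
  ∃ (k : ℕ) (f : Fin k → {x : Pt // x ∈ S}),
    Function.Injective f ∧
    (∀ w : {x : Pt // x ∈ S}, ¬ IsLeafV C.graph w ↔ ∃ i : Fin k, f i = w) ∧
    (∀ i j : Fin k, C.graph.Adj (f i) (f j) ↔ (i.1 + 1 = j.1 ∨ j.1 + 1 = i.1)) ∧
    (∀ i : Fin k, ∀ x : {x : Pt // x ∈ S},
      (x : Pt) ∈ convexHull ℝ {p : Pt | ∃ (j : Fin k) (w : {x : Pt // x ∈ S}),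
        j ≤ i ∧ p = (w : Pt) ∧ (w = f j ∨ (C.graph.Adj (f j) w ∧ IsLeafV C.graph w))} →
      ∃ (j : Fin k) (w : {x : Pt // x ∈ S}),
        j ≤ i ∧ (x : Pt) = (w : Pt) ∧ (w = f j ∨ (C.graph.Adj (f j) w ∧ IsLeafV C.graph w)))


/-! ### Auxiliary lemmas -/

lemma det2_swap (p q x : Pt) : det2 q p x = - det2 p q x := by
  simp only [det2]; ring

lemma det2_self_right (p q : Pt) : det2 p q q = 0 := by
  simp only [det2]; ring

lemma det2_swap23 (p q x : Pt) : det2 p x q = - det2 p q x := by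
  simp only [det2]; ring

lemma det2_self_left (p q : Pt) : det2 p q p = 0 := by
  simp only [det2]; ring

lemma det2_combo (p q x y : Pt) (a b : ℝ) (hab : a + b = 1) :
    det2 p q (a • x + b • y) = a * det2 p q x + b * det2 p q y := by
  have hb : b = 1 - a := by linarith
  subst hb
  simp only [det2, Prod.fst_add, Prod.snd_add, Prod.smul_fst, Prod.smul_snd, smul_eq_mul]
  ring

lemma det2_of_mem_openSegment {p q x : Pt} (hx : x ∈ openSegment ℝ p q) :
    det2 p q x = 0 := by
  obtain ⟨a, b, ha, hb, hab, rfl⟩ := hx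
  rw [det2_combo p q p q a b hab, det2_self_left, det2_self_right]; ring

lemma noncross_core {p q c d : Pt} (hc : 0 ≤ det2 p q c) (hd : 0 ≤ det2 p q d)
    (hsum : 0 < det2 p q c + det2 p q d) : ¬ SegCross p q c d := by
  rintro ⟨x, hx1, hx2⟩
  have h0 : det2 p q x = 0 := det2_of_mem_openSegment hx1
  obtain ⟨a, b, ha, hb, hab, rfl⟩ := hx2
  rw [det2_combo p q c d a b hab] at h0
  rcases eq_or_lt_of_le hc with h | h
  · have hd' : 0 < det2 p q d := by linarith
    nlinarith [mul_pos hb hd', mul_nonneg ha.le hc]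
  · nlinarith [mul_pos ha h, mul_nonneg hb.le hd]

lemma segCross_comm {a b c d : Pt} : SegCross a b c d ↔ SegCross c d a b := by
  unfold SegCross; rw [Set.inter_comm]

lemma segCross_swap_left {a b c d : Pt} : SegCross a b c d ↔ SegCross b a c d := by
  unfold SegCross; rw [openSegment_symm]

lemma convex_halfplane_lt (α β γ : ℝ) : Convex ℝ {x : Pt | γ < α * x.1 + β * x.2} := by
  intro x hx y hy a b ha hb hab
  simp only [Set.mem_setOf_eq, Prod.fst_add, Prod.snd_add, Prod.smul_fst, Prod.smul_snd,
    smul_eq_mul] at *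
  rcases eq_or_lt_of_le ha with h | h
  · have hb1 : b = 1 := by linarith
    subst hb1; rw [← h]; ring_nf; ring_nf at hy; linarith
  · have e1 : a * γ < a * (α * x.1 + β * x.2) := by exact mul_lt_mul_of_pos_left hx h
    have e2 : b * γ ≤ b * (α * y.1 + β * y.2) := mul_le_mul_of_nonneg_left hy.le hb
    have hγ : a * γ + b * γ = γ := by rw [← add_mul, hab, one_mul]
    nlinarith [e1, e2, hγ]

lemma convex_det_pos (p q : Pt) : Convex ℝ {x : Pt | 0 < det2 p q x} := by
  intro x hx y hy a b ha hb hab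
  simp only [Set.mem_setOf_eq] at *
  rw [det2_combo p q x y a b hab]
  rcases eq_or_lt_of_le ha with h | h
  · have hb1 : b = 1 := by linarith
    rw [← h, hb1]; simpa using hy
  · nlinarith [mul_pos h hx, mul_nonneg hb hy.le]

lemma convex_det_neg (p q : Pt) : Convex ℝ {x : Pt | det2 p q x < 0} := by
  intro x hx y hy a b ha hb hab
  simp only [Set.mem_setOf_eq] at *
  rw [det2_combo p q x y a b hab]
  rcases eq_or_lt_of_le ha with h | h
  · have hb1 : b = 1 := by linarith
    rw [← h, hb1]; simpa using hy
  · nlinarith [mul_pos h (neg_pos.mpr hx), mul_nonneg hb (neg_nonneg.mpr hy.le)]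

lemma collinear_of_det2_eq_zero {v x w : Pt} (hx : x ≠ v) (h : det2 v x w = 0) :
    Collinear ℝ ({v, x, w} : Set Pt) := by
  rw [collinear_iff_of_mem (Set.mem_insert v _)]
  refine ⟨x - v, ?_⟩
  have key : ∃ r : ℝ, r • (x - v) + v = w := by
    simp only [det2] at h
    by_cases h1 : x.1 = v.1
    · have h2 : x.2 ≠ v.2 := fun h2 => hx (Prod.ext h1 h2)
      have hne : x.2 - v.2 ≠ 0 := sub_ne_zero.mpr h2
      have hw1 : w.1 = v.1 := by
        have h0 : (x.2 - v.2) * (w.1 - v.1) = 0 := by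
          rw [h1] at h; linarith [h]
        rcases mul_eq_zero.mp h0 with h' | h'
        · exact absurd h' hne
        · linarith [sub_eq_zero.mp h']
      refine ⟨(w.2 - v.2) / (x.2 - v.2), ?_⟩
      apply Prod.ext
      · simp only [Prod.fst_add, Prod.smul_fst, Prod.fst_sub, smul_eq_mul]
        rw [h1, hw1]; ring
      · simp only [Prod.snd_add, Prod.smul_snd, Prod.snd_sub, smul_eq_mul]
        field_simp
        ring
    · have hne : x.1 - v.1 ≠ 0 := sub_ne_zero.mpr h1
      refine ⟨(w.1 - v.1) / (x.1 - v.1), ?_⟩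
      apply Prod.ext
      · simp only [Prod.fst_add, Prod.smul_fst, Prod.fst_sub, smul_eq_mul]
        field_simp
        ring
      · simp only [Prod.snd_add, Prod.smul_snd, Prod.snd_sub, smul_eq_mul]
        field_simp
        nlinarith [h]
  obtain ⟨r, hr⟩ := key
  rintro p hp
  simp only [Set.mem_insert_iff, Set.mem_singleton_iff] at hp
  rcases hp with rfl | rfl | rfl
  · exact ⟨0, by simp⟩
  · exact ⟨1, by simp⟩
  · exact ⟨r, by rw [← hr]; rfl⟩

lemma gp_det2_ne_zero {T : Finset Pt} (hgp : GeneralPosition T) {a b c : Pt}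
    (ha : a ∈ T) (hb : b ∈ T) (hc : c ∈ T) (hab : a ≠ b) (hac : a ≠ c) (hbc : b ≠ c) :
    det2 a b c ≠ 0 := by
  intro h
  exact hgp a ha b hb c hc hab hac hbc (collinear_of_det2_eq_zero (Ne.symm hab) h)

lemma exists_sep {T : Finset Pt} {v : Pt} (hv : HullVertex (↑T) v) :
    ∃ ν : Pt, ∀ x ∈ T, x ≠ v → ν.1 * v.1 + ν.2 * v.2 < ν.1 * x.1 + ν.2 * x.2 := by
  obtain ⟨hvT, hvh⟩ := hv
  have hfin : ((↑T : Set Pt) \ {v}).Finite := (T.finite_toSet).diff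
  obtain ⟨f, u, hfu, hub⟩ := geometric_hahn_banach_point_closed
    (convex_convexHull ℝ _) (hfin.isClosed_convexHull (𝕜 := ℝ)) hvh
  refine ⟨(f (1, 0), f (0, 1)), ?_⟩
  intro x hx hxv
  have hfx : ∀ z : Pt, f z = f (1,0) * z.1 + f (0,1) * z.2 := by
    intro z
    have hz : z = z.1 • ((1:ℝ), (0:ℝ)) + z.2 • ((0:ℝ), (1:ℝ)) := by
      apply Prod.ext <;> simp
    conv_lhs => rw [hz]
    rw [map_add, map_smul, map_smul, smul_eq_mul, smul_eq_mul]; ring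
  have hxm : x ∈ convexHull ℝ ((↑T : Set Pt) \ {v}) :=
    subset_convexHull ℝ _ ⟨hx, hxv⟩
  have := hub x hxm
  simp only [← hfx]
  linarith

/-- Existence of the two hull edges at a hull vertex. -/
lemma exists_two_hull_edges {T : Finset Pt} (hgp : GeneralPosition T) {v : Pt}
    (hv : HullVertex (↑T) v) (hne : (T.erase v).Nonempty) :
    ∃ w₁ w₂ : Pt, HullEdge (↑T) v w₁ ∧ HullEdge (↑T) v w₂ ∧
      (2 ≤ (T.erase v).card → w₁ ≠ w₂) := by
  obtain ⟨ν, hν⟩ := exists_sep hv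
  set F : Pt → ℝ := fun z => ν.1 * z.1 + ν.2 * z.2 with hF
  set G : Pt → ℝ := fun z => -ν.2 * z.1 + ν.1 * z.2 with hG
  have hFpos : ∀ x ∈ T.erase v, 0 < F x - F v := by
    intro x hx
    have := hν x (Finset.mem_of_mem_erase hx) (Finset.ne_of_mem_erase hx)
    simp only [hF]; linarith
  have hν2 : 0 < ν.1 ^ 2 + ν.2 ^ 2 := by
    obtain ⟨x, hx⟩ := hne
    have h1 := hFpos x hx
    rcases eq_or_lt_of_le (sq_nonneg ν.1 : (0:ℝ) ≤ ν.1 ^ 2) with h | h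
    · rcases eq_or_lt_of_le (sq_nonneg ν.2 : (0:ℝ) ≤ ν.2 ^ 2) with h' | h'
      · exfalso
        have hν1 : ν.1 = 0 := by nlinarith
        have hν2' : ν.2 = 0 := by nlinarith
        simp only [hF, hν1, hν2'] at h1; linarith
      · linarith [sq_nonneg ν.1]
    · linarith [sq_nonneg ν.2]
  have hdet : ∀ w x : Pt, (ν.1 ^ 2 + ν.2 ^ 2) * det2 v w x =
      (F w - F v) * (G x - G v) - (G w - G v) * (F x - F v) := by
    intro w x; simp only [det2, hF, hG]; ring
  set σ : Pt → ℝ := fun x => (G x - G v) / (F x - F v) with hσ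
  -- σ compares to cross products
  have hσlt : ∀ w ∈ T.erase v, ∀ x ∈ T.erase v, σ x < σ w → det2 v w x < 0 := by
    intro w hw x hx hlt
    have hFw := hFpos w hw
    have hFx := hFpos x hx
    have h1 : (G x - G v) * (F w - F v) < (G w - G v) * (F x - F v) := by
      have := (div_lt_div_iff₀ hFx hFw).mp hlt
      linarith
    nlinarith [hdet w x]
  have hσinj : ∀ w ∈ T.erase v, ∀ x ∈ T.erase v, σ x = σ w → x = w := by
    intro w hw x hx heq
    by_contra hxw
    have hFw := hFpos w hw
    have hFx := hFpos x hx
    have h1 : (G x - G v) * (F w - F v) = (G w - G v) * (F x - F v) := by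
      have := heq
      simp only [hσ] at this
      field_simp [ne_of_gt hFx, ne_of_gt hFw] at this
      linarith [this]
    have h0 : det2 v w x = 0 := by nlinarith [hdet w x]
    exact gp_det2_ne_zero hgp hv.1 (Finset.mem_of_mem_erase hw)
      (Finset.mem_of_mem_erase hx) (Ne.symm (Finset.ne_of_mem_erase hw))
      (Ne.symm (Finset.ne_of_mem_erase hx)) (fun h => hxw h.symm) h0
  obtain ⟨w₁, hw₁, hw₁max⟩ := Finset.exists_max_image (T.erase v) σ hne
  obtain ⟨w₂, hw₂, hw₂min⟩ := Finset.exists_min_image (T.erase v) σ hne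
  refine ⟨w₁, w₂, ?_, ?_, ?_⟩
  · refine ⟨hv.1, Finset.mem_of_mem_erase hw₁, (Finset.ne_of_mem_erase hw₁).symm, ?_⟩
    right
    intro x hxT hxv hxw
    have hx : x ∈ T.erase v := Finset.mem_erase.mpr ⟨hxv, hxT⟩
    have hle := hw₁max x hx
    have hlt : σ x < σ w₁ := lt_of_le_of_ne hle (fun h => hxw (hσinj w₁ hw₁ x hx h))
    exact hσlt w₁ hw₁ x hx hlt
  · refine ⟨hv.1, Finset.mem_of_mem_erase hw₂, (Finset.ne_of_mem_erase hw₂).symm, ?_⟩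
    left
    intro x hxT hxv hxw
    have hx : x ∈ T.erase v := Finset.mem_erase.mpr ⟨hxv, hxT⟩
    have hle := hw₂min x hx
    have hlt : σ w₂ < σ x := lt_of_le_of_ne hle (fun h => hxw (hσinj w₂ hw₂ x hx h.symm))
    have h := hσlt x hx w₂ hw₂ hlt
    rw [det2_swap23] at h
    linarith
  · intro hcard heq
    have hall : ∀ x ∈ T.erase v, x = w₁ := by
      intro x hx
      refine hσinj w₁ hw₁ x hx (le_antisymm (hw₁max x hx) ?_)
      rw [heq]
      exact hw₂min x hx
    obtain ⟨x, hx, y, hy, hxy⟩ := Finset.one_lt_card.mp hcard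
    exact hxy ((hall x hx).trans (hall y hy).symm)

lemma gp_subset {S T : Finset Pt} (h : T ⊆ S) (hgp : GeneralPosition S) :
    GeneralPosition T :=
  fun a ha b hb c hc => hgp a (h ha) b (h hb) c (h hc)

/-- A point all of whose companions lie strictly on one side of an affine functional is a
hull vertex. -/
lemma hullVertex_of_halfplane {A : Set Pt} {v : Pt} (hvA : v ∈ A) (α β : ℝ)
    (hstrict : ∀ x ∈ A \ {v}, α * v.1 + β * v.2 < α * x.1 + β * x.2) :
    HullVertex A v := by
  refine ⟨hvA, fun hc => ?_⟩
  have hsub : convexHull ℝ (A \ {v}) ⊆ {x : Pt | α * v.1 + β * v.2 < α * x.1 + β * x.2} :=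
    convexHull_min (fun x hx => hstrict x hx) (convex_halfplane_lt _ _ _)
  have h := hsub hc
  simp only [Set.mem_setOf_eq] at h
  linarith

lemma exists_start {S : Finset Pt} (hne : S.Nonempty) :
    ∃ p : Pt × Pt, HullVertex (↑S) p.1 ∧ HullVertex (↑S) p.2 ∧
      (2 ≤ S.card → p.1 ≠ p.2) := by
  -- choose a generic linear functional x ↦ x.1 + ε * x.2 injective on S
  have hbad : {e : ℝ | ∃ x ∈ S, ∃ y ∈ S, x ≠ y ∧ x.1 + e * x.2 = y.1 + e * y.2}.Finite := by
    apply Set.Finite.subset (Set.Finite.image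
      (fun p : Pt × Pt => (p.2.1 - p.1.1) / (p.1.2 - p.2.2))
      (((S.finite_toSet).prod (S.finite_toSet))))
    rintro e ⟨x, hx, y, hy, hxy, heq⟩
    refine ⟨(x, y), ⟨hx, hy⟩, ?_⟩
    have h2 : x.2 ≠ y.2 := by
      intro h2
      have h1 : x.1 = y.1 := by rw [h2] at heq; linarith
      exact hxy (Prod.ext h1 h2)
    have hne2 : x.2 - y.2 ≠ 0 := sub_ne_zero.mpr h2
    field_simp
    linarith
  obtain ⟨ε, hε⟩ := Set.Infinite.nonempty (Set.Finite.infinite_compl hbad)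
  have hinj : ∀ x ∈ S, ∀ y ∈ S, x ≠ y → x.1 + ε * x.2 ≠ y.1 + ε * y.2 := by
    intro x hx y hy hxy heq
    exact hε ⟨x, hx, y, hy, hxy, heq⟩
  set F : Pt → ℝ := fun z => z.1 + ε * z.2 with hF
  obtain ⟨p₁, hp₁, hp₁min⟩ := Finset.exists_min_image S F hne
  obtain ⟨p₂, hp₂, hp₂max⟩ := Finset.exists_max_image S F hne
  have hv1 : HullVertex (↑S) p₁ := by
    apply hullVertex_of_halfplane (by exact_mod_cast hp₁) 1 ε
    rintro x ⟨hx, hxp⟩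
    have hx' : x ∈ S := by exact_mod_cast hx
    have hle := hp₁min x hx'
    have hne' : F p₁ ≠ F x :=
      hinj p₁ hp₁ x hx' (fun h => hxp (Set.mem_singleton_iff.mpr h.symm))
    have h := lt_of_le_of_ne hle hne'
    simp only [hF] at h ⊢
    linarith
  have hv2 : HullVertex (↑S) p₂ := by
    apply hullVertex_of_halfplane (by exact_mod_cast hp₂) (-1) (-ε)
    rintro x ⟨hx, hxp⟩
    have hx' : x ∈ S := by exact_mod_cast hx
    have hle := hp₂max x hx'
    have hne' : F x ≠ F p₂ :=
      hinj x hx' p₂ hp₂ (fun h => hxp (Set.mem_singleton_iff.mpr h))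
    have h := lt_of_le_of_ne hle hne'
    simp only [hF] at h ⊢
    linarith
  refine ⟨(p₁, p₂), hv1, hv2, fun hcard heq => ?_⟩
  have heq' : p₁ = p₂ := heq
  obtain ⟨x, hx, y, hy, hxy⟩ := Finset.one_lt_card.mp hcard
  have hne2 : ∃ z ∈ S, z ≠ p₁ := by
    by_cases h : x = p₁
    · exact ⟨y, hy, fun hy' => hxy (h.trans hy'.symm)⟩
    · exact ⟨x, hx, h⟩
  obtain ⟨z, hz, hzp⟩ := hne2
  have h1 : F p₁ ≠ F z := hinj p₁ hp₁ z hz (Ne.symm hzp)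
  have h2 : F p₁ < F z := lt_of_le_of_ne (hp₁min z hz) h1
  have h3 : F z ≤ F p₂ := hp₂max z hz
  rw [heq'] at h2
  linarith

/-- The second endpoint of a hull edge is a hull vertex of the set with the first removed. -/
lemma hullVertex_next {T : Finset Pt} {v w : Pt} (h : HullEdge (↑T) v w) :
    HullVertex (↑(T.erase v)) w := by
  obtain ⟨hvT, hwT, hvw, hside⟩ := h
  have hwm : w ∈ T.erase v := Finset.mem_erase.mpr ⟨hvw.symm, by exact_mod_cast hwT⟩
  refine ⟨by exact_mod_cast hwm, fun hc => ?_⟩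
  rcases hside with hs | hs
  · have hsub : convexHull ℝ ((↑(T.erase v) : Set Pt) \ {w}) ⊆ {x : Pt | 0 < det2 v w x} := by
      apply convexHull_min _ (convex_det_pos v w)
      rintro x ⟨hx, hxw⟩
      rw [Finset.coe_erase] at hx
      exact hs x hx.1 (by simpa using hx.2) (by simpa using hxw)
    have := hsub hc
    simp only [Set.mem_setOf_eq, det2_self_right] at this
    exact lt_irrefl _ this
  · have hsub : convexHull ℝ ((↑(T.erase v) : Set Pt) \ {w}) ⊆ {x : Pt | det2 v w x < 0} := by
      apply convexHull_min _ (convex_det_neg v w)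
      rintro x ⟨hx, hxw⟩
      rw [Finset.coe_erase] at hx
      exact hs x hx.1 (by simpa using hx.2) (by simpa using hxw)
    have := hsub hc
    simp only [Set.mem_setOf_eq, det2_self_right] at this
    exact lt_irrefl _ this

/-- The segment realizing a hull edge does not cross any segment between remaining points. -/
lemma noncross_of_hullEdge {T : Finset Pt} {v w : Pt} (h : HullEdge (↑T) v w)
    {c d : Pt} (hc : c ∈ T.erase v) (hd : d ∈ T.erase v) (hcd : c ≠ d) :
    ¬ SegCross v w c d := by
  obtain ⟨hvT, hwT, hvw, hside⟩ := h
  have hcT : c ∈ T := Finset.mem_of_mem_erase hc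
  have hdT : d ∈ T := Finset.mem_of_mem_erase hd
  have hcv : c ≠ v := Finset.ne_of_mem_erase hc
  have hdv : d ≠ v := Finset.ne_of_mem_erase hd
  rcases hside with hs | hs
  · have hcc : 0 ≤ det2 v w c := by
      rcases eq_or_ne c w with rfl | hcw
      · rw [det2_self_right]
      · exact (hs c hcT hcv hcw).le
    have hdd : 0 ≤ det2 v w d := by
      rcases eq_or_ne d w with rfl | hdw
      · rw [det2_self_right]
      · exact (hs d hdT hdv hdw).le
    have hsum : 0 < det2 v w c + det2 v w d := by
      rcases eq_or_ne c w with rfl | hcw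
      · have := hs d hdT hdv (fun h => hcd h.symm)
        rw [det2_self_right]; linarith
      · have := hs c hcT hcv hcw
        linarith
    exact noncross_core hcc hdd hsum
  · have hswap : ∀ x : Pt, det2 w v x = - det2 v w x := fun x => det2_swap v w x
    have hDc : det2 v w c ≤ 0 := by
      by_cases hcw : c = w
      · rw [hcw, det2_self_right]
      · exact (hs c hcT hcv hcw).le
    have hDd : det2 v w d ≤ 0 := by
      by_cases hdw : d = w
      · rw [hdw, det2_self_right]
      · exact (hs d hdT hdv hdw).le
    have hcc : 0 ≤ det2 w v c := by rw [hswap]; linarith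
    have hdd : 0 ≤ det2 w v d := by rw [hswap]; linarith
    have hsum : 0 < det2 w v c + det2 w v d := by
      rw [hswap, hswap]
      by_cases hcw : c = w
      · have hdw : d ≠ w := fun hh => hcd (hcw.trans hh.symm)
        have := hs d hdT hdv hdw
        rw [hcw, det2_self_right]
        linarith
      · have := hs c hcT hcv hcw
        linarith
    intro hcross
    exact noncross_core hcc hdd hsum (segCross_swap_left.mp hcross)

/-! ### The peeling recursion -/

def PickSpec (T : Finset Pt) (v : Pt) (p : Pt × Pt) : Prop :=
  HullEdge (↑T) v p.1 ∧ HullEdge (↑T) v p.2 ∧ (2 ≤ (T.erase v).card → p.1 ≠ p.2)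

noncomputable def pick (T : Finset Pt) (v : Pt) : Pt × Pt :=
  haveI := Classical.propDecidable (∃ p, PickSpec T v p)
  if h : ∃ p, PickSpec T v p then h.choose else (v, v)

lemma pick_spec {T : Finset Pt} {v : Pt} (hgp : GeneralPosition T)
    (hv : HullVertex (↑T) v) (hne : (T.erase v).Nonempty) : PickSpec T v (pick T v) := by
  have h : ∃ p, PickSpec T v p := by
    obtain ⟨w₁, w₂, h1, h2, h3⟩ := exists_two_hull_edges hgp hv hne
    exact ⟨(w₁, w₂), h1, h2, h3⟩
  rw [pick, dif_pos h]
  exact h.choose_spec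

def StartSpec (S : Finset Pt) (p : Pt × Pt) : Prop :=
  HullVertex (↑S) p.1 ∧ HullVertex (↑S) p.2 ∧ (2 ≤ S.card → p.1 ≠ p.2)

noncomputable def startP (S : Finset Pt) : Pt × Pt :=
  haveI := Classical.propDecidable (∃ p, StartSpec S p)
  if h : ∃ p, StartSpec S p then h.choose else ((0, 0), (0, 0))

lemma startP_spec {S : Finset Pt} (hne : S.Nonempty) : StartSpec S (startP S) := by
  have h : ∃ p, StartSpec S p := exists_start hne
  rw [startP, dif_pos h]
  exact h.choose_spec

/-- The peeling recursion: state after `i` steps is the pair (remaining points, last vertex). -/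
noncomputable def stepF (S : Finset Pt) (b : ℕ → Bool) : ℕ → Finset Pt × Pt
  | 0 => (S, if b 0 then (startP S).1 else (startP S).2)
  | i + 1 => ((stepF S b i).1.erase (stepF S b i).2,
      if b (i + 1) then (pick (stepF S b i).1 (stepF S b i).2).1
      else (pick (stepF S b i).1 (stepF S b i).2).2)

lemma stepF_congr (S : Finset Pt) (b c : ℕ → Bool) :
    ∀ i : ℕ, (∀ j ≤ i, b j = c j) → stepF S b i = stepF S c i := by
  intro i
  induction i with
  | zero => intro h; simp [stepF, h 0 le_rfl]
  | succ i ih =>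
    intro h
    have h1 := ih (fun j hj => h j (le_trans hj (Nat.le_succ i)))
    simp only [stepF, h1, h (i + 1) le_rfl]

/-- The main invariant of the peeling recursion. -/
lemma stepF_inv (S : Finset Pt) (hgp : GeneralPosition S) (b : ℕ → Bool) :
    ∀ i : ℕ, i < S.card →
      (stepF S b i).1 ⊆ S ∧ (stepF S b i).1.card = S.card - i ∧
      HullVertex (↑(stepF S b i).1) (stepF S b i).2 := by
  intro i
  induction i with
  | zero =>
    intro h0
    have hne : S.Nonempty := Finset.card_pos.mp h0
    have hs := startP_spec hne
    refine ⟨Finset.Subset.refl S, by simp [stepF], ?_⟩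
    simp only [stepF]
    by_cases hb : b 0 = true
    · rw [if_pos hb]; exact hs.1
    · rw [if_neg hb]; exact hs.2.1
  | succ i ih =>
    intro hi
    obtain ⟨hsub, hcard, hhv⟩ := ih (Nat.lt_of_succ_lt hi)
    set T := (stepF S b i).1
    set v := (stepF S b i).2
    have hvT : v ∈ T := hhv.1
    have hTgp : GeneralPosition T := gp_subset hsub hgp
    have hecard : (T.erase v).card = S.card - (i + 1) := by
      rw [Finset.card_erase_of_mem hvT, hcard]
      omega
    have hene : (T.erase v).Nonempty := by
      rw [← Finset.card_pos, hecard]; omega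
    have hp := pick_spec hTgp hhv hene
    have hstep1 : (stepF S b (i + 1)).1 = T.erase v := rfl
    have hstep2 : (stepF S b (i + 1)).2 =
        (if b (i + 1) then (pick T v).1 else (pick T v).2) := rfl
    refine ⟨?_, ?_, ?_⟩
    · rw [hstep1]; exact (Finset.erase_subset _ _).trans hsub
    · rw [hstep1]; exact hecard
    · rw [hstep1, hstep2]
      by_cases hb : b (i + 1) = true
      · rw [if_pos hb]; exact hullVertex_next hp.1
      · rw [if_neg hb]; exact hullVertex_next hp.2.1

/-- The consecutive vertices form a hull edge of the current remaining set. -/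
lemma stepF_edge (S : Finset Pt) (hgp : GeneralPosition S) (b : ℕ → Bool)
    (i : ℕ) (hi : i + 1 < S.card) :
    HullEdge (↑(stepF S b i).1) (stepF S b i).2 (stepF S b (i + 1)).2 := by
  obtain ⟨hsub, hcard, hhv⟩ := stepF_inv S hgp b i (Nat.lt_of_succ_lt hi)
  set T := (stepF S b i).1
  set v := (stepF S b i).2
  have hTgp : GeneralPosition T := gp_subset hsub hgp
  have hene : (T.erase v).Nonempty := by
    rw [← Finset.card_pos, Finset.card_erase_of_mem hhv.1, hcard]; omega
  have hp := pick_spec hTgp hhv hene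
  have hstep2 : (stepF S b (i + 1)).2 =
      (if b (i + 1) then (pick T v).1 else (pick T v).2) := rfl
  rw [hstep2]
  by_cases hb : b (i + 1) = true
  · rw [if_pos hb]; exact hp.1
  · rw [if_neg hb]; exact hp.2.1

lemma stepF_antitone (S : Finset Pt) (b : ℕ → Bool) {i j : ℕ} (hij : i ≤ j) :
    (stepF S b j).1 ⊆ (stepF S b i).1 := by
  induction j with
  | zero => rw [Nat.le_zero.mp hij]
  | succ j ih =>
    by_cases h : i ≤ j
    · exact (Finset.erase_subset _ _).trans (ih h)
    · have : i = j + 1 := by omega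
      rw [this]

lemma stepF_peelRest (S : Finset Pt) (b : ℕ → Bool) :
    ∀ i : ℕ, PeelRest S (fun k => (stepF S b k).2) i = ↑(stepF S b i).1 := by
  intro i
  induction i with
  | zero =>
    have h0 : (stepF S b 0).1 = S := rfl
    ext x
    simp [PeelRest, h0]
  | succ i ih =>
    ext x
    have hx : x ∈ PeelRest S (fun k => (stepF S b k).2) (i + 1) ↔
        x ∈ PeelRest S (fun k => (stepF S b k).2) i ∧ (stepF S b i).2 ≠ x := by
      simp only [PeelRest, Set.mem_setOf_eq]
      constructor
      · rintro ⟨hxS, hj⟩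
        exact ⟨⟨hxS, fun j hji => hj j (Nat.lt_succ_of_lt hji)⟩, hj i (Nat.lt_succ_self i)⟩
      · rintro ⟨⟨hxS, hj⟩, hi⟩
        refine ⟨hxS, fun j hj1 => ?_⟩
        rcases Nat.lt_succ_iff_lt_or_eq.mp hj1 with h | h
        · exact hj j h
        · rw [h]; exact hi
    rw [hx]
    have hstep : (stepF S b (i + 1)).1 = (stepF S b i).1.erase (stepF S b i).2 := rfl
    rw [hstep]
    simp only [Finset.coe_erase, Set.mem_diff, Set.mem_singleton_iff, ih]
    constructor
    · rintro ⟨h1, h2⟩; exact ⟨h1, fun h => h2 h.symm⟩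
    · rintro ⟨h1, h2⟩; exact ⟨h1, fun h => h2 h.symm⟩

lemma stepF_isGenPeeling (S : Finset Pt) (hgp : GeneralPosition S) (n : ℕ)
    (hn : S.card = n) (h2 : 2 ≤ n) (b : ℕ → Bool) :
    IsGenPeelingSeq S n (fun k => (stepF S b k).2) := by
  set v : ℕ → Pt := fun k => (stepF S b k).2 with hv
  set R : ℕ → Finset Pt := fun k => (stepF S b k).1 with hR
  have hinv : ∀ i : ℕ, i < n → R i ⊆ S ∧ (R i).card = n - i ∧ HullVertex (↑(R i)) (v i) := by
    intro i hi
    have := stepF_inv S hgp b i (by omega)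
    rw [hn] at this
    exact this
  have hmem : ∀ i : ℕ, i < n → v i ∈ R i := fun i hi => (hinv i hi).2.2.1
  have hRsucc : ∀ i : ℕ, R (i + 1) = (R i).erase (v i) := fun i => rfl
  have hanti : ∀ i j : ℕ, i ≤ j → R j ⊆ R i := fun i j h => stepF_antitone S b h
  have hinj : ∀ i, i < n → ∀ j, j < n → i < j → v i ≠ v j := by
    intro i hi j hj hij heq
    have h1 : v j ∈ R j := hmem j hj
    have h2 : R j ⊆ R (i + 1) := hanti (i + 1) j hij
    have h3 : v j ∈ (R i).erase (v i) := by rw [← hRsucc]; exact h2 h1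
    exact (Finset.ne_of_mem_erase h3) heq.symm
  have hinj' : ∀ i, i < n → ∀ j, j < n → v i = v j → i = j := by
    intro i hi j hj heq
    rcases lt_trichotomy i j with h | h | h
    · exact absurd heq (hinj i hi j hj h)
    · exact h
    · exact absurd heq.symm (hinj j hj i hi h)
  have hRn : R n = ∅ := by
    have h1 : n - 1 < n := by omega
    have h2' := (hinv (n - 1) h1).2.1
    have h3 : n = (n - 1) + 1 := by omega
    rw [← Finset.card_eq_zero]
    have : (R ((n - 1) + 1)).card = 0 := by
      rw [hRsucc, Finset.card_erase_of_mem (hmem _ h1), h2']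
      omega
    rw [h3]
    exact this
  have hedge : ∀ i : ℕ, i + 1 < n → HullEdge (↑(R i)) (v i) (v (i + 1)) := by
    intro i hi
    exact stepF_edge S hgp b i (by omega)
  have hcross : ∀ i j : ℕ, i + 1 < n → j + 1 < n → i < j →
      ¬ SegCross (v i) (v (i + 1)) (v j) (v (j + 1)) := by
    intro i j hi hj hij
    apply noncross_of_hullEdge (hedge i hi)
    · rw [← hRsucc]
      exact hanti (i + 1) j hij (hmem j (by omega))
    · rw [← hRsucc]
      exact hanti (i + 1) (j + 1) (by omega) (hmem (j + 1) hj)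
    · exact hinj j (by omega) (j + 1) hj (Nat.lt_succ_self j)
  have hPR : ∀ i : ℕ, PeelRest S v i = ↑(R i) := stepF_peelRest S b
  refine ⟨?_, ?_, ?_, ?_, ?_, ?_⟩
  · intro i hi
    exact (hinv i hi).1 (hmem i hi)
  · exact hinj'
  · intro x hx
    by_contra hc
    push_neg at hc
    have hxPR : x ∈ PeelRest S v n := ⟨hx, fun j hj => hc j hj⟩
    rw [hPR n, hRn] at hxPR
    simpa using hxPR
  · intro i j hi hj hij
    rcases lt_or_gt_of_ne hij with h | h
    · exact hcross i j hi hj h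
    · intro hc
      exact hcross j i hj hi h (segCross_comm.mp hc)
  · have := (hinv 0 (by omega)).2.2
    have h0 : (R 0 : Set Pt) = ↑S := rfl
    rwa [h0] at this
  · intro i h0 hiN
    obtain ⟨m, rfl⟩ : ∃ m, i = m + 1 := ⟨i - 1, by omega⟩
    constructor
    · rw [hPR]
      exact (hinv (m + 1) hiN).2.2
    · intro a b' hab
      rw [hPR] at hab
      obtain ⟨haR, hbR, hne', _⟩ := hab
      have haR' : a ∈ R (m + 1) := by exact_mod_cast haR
      have hbR' : b' ∈ R (m + 1) := by exact_mod_cast hbR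
      have hmm : m + 1 - 1 = m := by omega
      rw [hmm]
      apply noncross_of_hullEdge (hedge m hiN)
      · rw [← hRsucc]; exact haR'
      · rw [← hRsucc]; exact hbR'
      · exact hne'

lemma stepF_ne (S : Finset Pt) (hgp : GeneralPosition S) (b c : ℕ → Bool) (k : ℕ)
    (hk : k + 1 < S.card) (hagree : ∀ j, j < k → b j = c j) (hbc : b k ≠ c k) :
    (stepF S b k).2 ≠ (stepF S c k).2 := by
  cases k with
  | zero =>
    have hne : S.Nonempty := Finset.card_pos.mp (by omega)
    have hs := startP_spec hne
    have hp12 : (startP S).1 ≠ (startP S).2 := hs.2.2 (by omega)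
    have hb2 : (stepF S b 0).2 = (if b 0 then (startP S).1 else (startP S).2) := rfl
    have hc2 : (stepF S c 0).2 = (if c 0 then (startP S).1 else (startP S).2) := rfl
    rw [hb2, hc2]
    rcases Bool.eq_false_or_eq_true (b 0) with h | h <;>
      rcases Bool.eq_false_or_eq_true (c 0) with h' | h' <;>
        simp [h, h'] at hbc ⊢
    · exact hp12
    · exact fun hh => hp12 hh.symm
  | succ m =>
    have heqm : stepF S b m = stepF S c m :=
      stepF_congr S b c m (fun j hj => hagree j (Nat.lt_succ_of_le hj))
    obtain ⟨hsub, hcard, hhv⟩ := stepF_inv S hgp b m (by omega)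
    set T := (stepF S b m).1
    set v := (stepF S b m).2
    have hTgp : GeneralPosition T := gp_subset hsub hgp
    have hec : (T.erase v).card = S.card - m - 1 := by
      rw [Finset.card_erase_of_mem hhv.1, hcard]
    have hene : (T.erase v).Nonempty := by
      rw [← Finset.card_pos, hec]; omega
    have hp := pick_spec hTgp hhv hene
    have hp12 : (pick T v).1 ≠ (pick T v).2 := hp.2.2 (by rw [hec]; omega)
    have hb2 : (stepF S b (m + 1)).2 =
        (if b (m + 1) then (pick T v).1 else (pick T v).2) := rfl
    have hc2 : (stepF S c (m + 1)).2 =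
        (if c (m + 1) then (pick (stepF S c m).1 (stepF S c m).2).1
          else (pick (stepF S c m).1 (stepF S c m).2).2) := rfl
    rw [hb2, hc2, ← heqm]
    rcases Bool.eq_false_or_eq_true (b (m + 1)) with h | h <;>
      rcases Bool.eq_false_or_eq_true (c (m + 1)) with h' | h' <;>
        simp [h, h'] at hbc ⊢
    · exact hp12
    · exact fun hh => hp12 hh.symm

/-- For `S` a set of `n ≥ 2` points in general position, there are at least
`2 ^ (n - 1)` generalized peeling paths on `S`, counted as oriented plane spanning paths. -/
theorem many_generalized_peeling_paths (S : Finset Pt) (hgp : GeneralPosition S)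
    (n : ℕ) (hn : S.card = n) (h2 : 2 ≤ n) :
    2 ^ (n - 1) ≤
      {w : Fin n → Pt | ∃ v : ℕ → Pt, (∀ i : Fin n, v i.1 = w i) ∧
        IsGenPeelingSeq S n v}.ncard := by
  classical
  set target := {w : Fin n → Pt | ∃ v : ℕ → Pt, (∀ i : Fin n, v i.1 = w i) ∧
      IsGenPeelingSeq S n v} with htarget
  set bext : (Fin (n - 1) → Bool) → ℕ → Bool :=
    fun bb j => if h : j < n - 1 then bb ⟨j, h⟩ else false with hbext
  set F : (Fin (n - 1) → Bool) → (Fin n → Pt) :=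
    fun bb i => (stepF S (bext bb) i.1).2 with hF
  have hrange : Set.range F ⊆ target := by
    rintro w ⟨bb, rfl⟩
    exact ⟨fun k => (stepF S (bext bb) k).2, fun i => rfl,
      stepF_isGenPeeling S hgp n hn h2 (bext bb)⟩
  have hFinj : Function.Injective F := by
    intro bb cc hFeq
    by_contra hne
    obtain ⟨a, ha⟩ := Function.ne_iff.mp hne
    have hex : ∃ j : ℕ, bext bb j ≠ bext cc j := by
      refine ⟨a.1, ?_⟩
      simp only [hbext, dif_pos a.2]
      intro h
      exact ha (by rwa [Fin.eta] at h)
    set k := Nat.find hex with hkdef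
    have hk : bext bb k ≠ bext cc k := Nat.find_spec hex
    have hmin : ∀ j, j < k → bext bb j = bext cc j := by
      intro j hj
      by_contra h
      exact Nat.find_min hex hj h
    have hkn : k < n - 1 := by
      by_contra h
      apply hk
      simp only [hbext, dif_neg (by omega : ¬ k < n - 1)]
    have hvne := stepF_ne S hgp (bext bb) (bext cc) k (by omega) hmin hk
    have : F bb ⟨k, by omega⟩ = F cc ⟨k, by omega⟩ := by rw [hFeq]
    exact hvne this
  have hfin : target.Finite := by
    apply Set.Finite.subset (Set.Finite.pi (fun i : Fin n => S.finite_toSet)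
      : (Set.pi Set.univ (fun _ : Fin n => (↑S : Set Pt))).Finite)
    rintro w ⟨v, hvw, hpeel⟩
    intro i _
    rw [← hvw i]
    exact hpeel.1 i.1 i.2
  calc 2 ^ (n - 1) = (Set.range F).ncard := by
        rw [← Set.image_univ, Set.ncard_image_of_injective _ hFinj, Set.ncard_univ,
          Nat.card_eq_fintype_card, Fintype.card_fun]
        simp
    _ ≤ target.ncard := Set.ncard_le_ncard hrange hfin
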